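/- Let c > 0, L > 0, T > 0, K ∈ ℕ, and set λ_k = kπ/L for k = 1, …, K. Suppose two coefficient vectors (b_k) and (b'_k) in ℝ^K give truncated series solutions w_K(x,t) = (√2/c^2) Σ_{k=1}^{K} (b_k/λ_k^2)(1 − cos(c λ_k t)) sin(λ_k x) and w'_K analogously, and that their fluxes agree at x = 0: ∂_x w_K(0,t) = ∂_x w'_K(0,t) for all t ∈ [0,T]. Then b_k = b'_k for all k, and hence w_K = w'_K and the associated forces f_K(x) = √2 Σ_{k=1}^{K} b_k sin(λ_k x) and f'_K coincide. -/

import Mathlib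

open Real Finset Matrix

lemma sum_Icc_fin {M : Type*} [AddCommMonoid M] (K : ℕ) (f : ℕ → M) :
    ∑ k ∈ Finset.Icc 1 K, f k = ∑ j : Fin K, f (j + 1) := by
  induction K with
  | zero => simp
  | succ n ih =>
      rw [Finset.sum_Icc_succ_top (by omega), ih, Fin.sum_univ_castSucc]
      simp

lemma vander_zero (K : ℕ) (x a : ℕ → ℝ)
    (hx : ∀ i ∈ Finset.Icc 1 K, ∀ j ∈ Finset.Icc 1 K, i ≠ j → x i ≠ x j)
    (h : ∀ n < K, ∑ k ∈ Finset.Icc 1 K, a k * x k ^ n = 0) :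
    ∀ k ∈ Finset.Icc 1 K, a k = 0 := by
  set w : Fin K → ℝ := fun j => x (j + 1) with hw
  set v : Fin K → ℝ := fun j => a (j + 1) with hv
  have hwinj : Function.Injective w := by
    intro i j hij
    by_contra hne
    have h1 : ((i : ℕ) + 1) ≠ ((j : ℕ) + 1) := by
      intro hh
      exact hne (Fin.ext (by omega))
    exact hx ((i : ℕ) + 1) (by simp [Finset.mem_Icc]) ((j : ℕ) + 1)
      (by simp [Finset.mem_Icc]) h1 hij
  have hdet : ((Matrix.vandermonde w)ᵀ).det ≠ 0 := by
    rw [Matrix.det_transpose]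
    exact Matrix.det_vandermonde_ne_zero_iff.2 hwinj
  have hmv : (Matrix.vandermonde w)ᵀ.mulVec v = 0 := by
    funext n
    have := h n n.isLt
    rw [sum_Icc_fin] at this
    simpa [Matrix.mulVec, Matrix.vandermonde, dotProduct, mul_comm] using this
  have hv0 : v = 0 := Matrix.eq_zero_of_mulVec_eq_zero hdet hmv
  intro k hk
  simp only [Finset.mem_Icc] at hk
  have : v ⟨k - 1, by omega⟩ = 0 := by rw [hv0]; rfl
  simpa [hv, Nat.sub_add_cancel hk.1] using this

lemma key_uniqueness (T : ℝ) (hT : 0 < T) (K : ℕ) (μ d : ℕ → ℝ)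
    (hμ : ∀ k ∈ Finset.Icc 1 K, 0 < μ k)
    (hμinj : ∀ i ∈ Finset.Icc 1 K, ∀ j ∈ Finset.Icc 1 K, i ≠ j → μ i ≠ μ j)
    (h0 : ∀ t ∈ Set.Ioo (0:ℝ) T, ∑ k ∈ Finset.Icc 1 K, d k * (1 - Real.cos (μ k * t)) = 0) :
    ∀ k ∈ Finset.Icc 1 K, d k = 0 := by
  set F : ℕ → ℝ → ℝ := fun n t => ∑ k ∈ Finset.Icc 1 K, d k * μ k ^ (2*n) * Real.cos (μ k * t) with hF
  set G : ℕ → ℝ → ℝ := fun n t => ∑ k ∈ Finset.Icc 1 K, d k * μ k ^ (2*n+1) * Real.sin (μ k * t) with hG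
  have hF' : ∀ n t, HasDerivAt (F n) (-(G n t)) t := by
    intro n t
    have hsum := HasDerivAt.fun_sum (fun k (hk : k ∈ Finset.Icc 1 K) =>
      (((Real.hasDerivAt_cos (μ k * t)).comp t
        ((hasDerivAt_id t).const_mul (μ k))).const_mul (d k * μ k ^ (2*n))))
    convert hsum using 1
    · rfl
    · rfl
    · rfl
    rw [hG, neg_eq_iff_eq_neg, ← Finset.sum_neg_distrib]
    exact Finset.sum_congr rfl fun k _ => by ring
  have hG' : ∀ n t, HasDerivAt (G n) (F (n+1) t) t := by
    intro n t
    have hsum := HasDerivAt.fun_sum (fun k (hk : k ∈ Finset.Icc 1 K) =>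
      (((Real.hasDerivAt_sin (μ k * t)).comp t
        ((hasDerivAt_id t).const_mul (μ k))).const_mul (d k * μ k ^ (2*n+1))))
    convert hsum using 1
    · rfl
    · rfl
    · rfl
    exact Finset.sum_congr rfl fun k _ => by ring
  have derivzero : ∀ (J : ℝ → ℝ) (C : ℝ), (∀ s ∈ Set.Ioo (0:ℝ) T, J s = C) →
      ∀ t ∈ Set.Ioo (0:ℝ) T, deriv J t = 0 := by
    intro J C hJ t ht
    have hev : J =ᶠ[nhds t] fun _ => C :=
      Filter.eventuallyEq_of_mem (isOpen_Ioo.mem_nhds ht) hJ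
    rw [hev.deriv_eq]
    exact deriv_const t C
  have stepG : ∀ (n : ℕ) (C : ℝ), (∀ t ∈ Set.Ioo (0:ℝ) T, F n t = C) →
      ∀ t ∈ Set.Ioo (0:ℝ) T, G n t = 0 := by
    intro n C hC t ht
    have h1 : deriv (F n) t = -(G n t) := (hF' n t).deriv
    have h2 := derivzero (F n) C hC t ht
    linarith [h1 ▸ h2]
  have stepF : ∀ (n : ℕ) (C : ℝ), (∀ t ∈ Set.Ioo (0:ℝ) T, F n t = C) →
      ∀ t ∈ Set.Ioo (0:ℝ) T, F (n+1) t = 0 := by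
    intro n C hC t ht
    have h1 : deriv (G n) t = F (n+1) t := (hG' n t).deriv
    have h2 := derivzero (G n) 0 (stepG n C hC) t ht
    linarith [h1 ▸ h2]
  have hF0 : ∀ t ∈ Set.Ioo (0:ℝ) T, F 0 t = ∑ k ∈ Finset.Icc 1 K, d k := by
    intro t ht
    have := h0 t ht
    rw [hF]
    simp only [Nat.mul_zero, pow_zero, mul_one]
    have expand : ∑ k ∈ Finset.Icc 1 K, d k * (1 - Real.cos (μ k * t)) =
        (∑ k ∈ Finset.Icc 1 K, d k) - ∑ k ∈ Finset.Icc 1 K, d k * Real.cos (μ k * t) := by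
      rw [← Finset.sum_sub_distrib]
      exact Finset.sum_congr rfl fun k _ => by ring
    rw [expand] at this
    linarith
  have hFn : ∀ n, ∀ t ∈ Set.Ioo (0:ℝ) T, F (n+1) t = 0 := by
    intro n
    induction n with
    | zero => exact stepF 0 _ hF0
    | succ m ih => exact stepF (m+1) 0 ih
  have hGn : ∀ n, ∀ t ∈ Set.Ioo (0:ℝ) T, G n t = 0 := by
    intro n
    cases n with
    | zero => exact stepG 0 _ hF0
    | succ m => exact stepG (m+1) 0 (hFn m)
  set t₀ : ℝ := T/2 with ht₀def
  have ht₀ : t₀ ∈ Set.Ioo (0:ℝ) T := by constructor <;> [linarith; linarith]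
  have hxinj : ∀ i ∈ Finset.Icc 1 K, ∀ j ∈ Finset.Icc 1 K, i ≠ j → μ i ^ 2 ≠ μ j ^ 2 := by
    intro i hi j hj hne heq
    have h1 : (μ i - μ j) * (μ i + μ j) = 0 := by linear_combination heq
    have h2 : μ i + μ j > 0 := by have := hμ i hi; have := hμ j hj; linarith
    have h3 : μ i - μ j = 0 := by
      rcases mul_eq_zero.mp h1 with h | h
      · exact h
      · linarith
    exact hμinj i hi j hj hne (by linarith)
  have hA : ∀ k ∈ Finset.Icc 1 K, d k * μ k ^ 2 * Real.cos (μ k * t₀) = 0 := by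
    apply vander_zero K (fun k => μ k ^ 2) _ hxinj
    intro n _
    have := hFn n t₀ ht₀
    rw [hF] at this
    rw [← this]
    exact Finset.sum_congr rfl fun k _ => by ring
  have hB : ∀ k ∈ Finset.Icc 1 K, d k * μ k * Real.sin (μ k * t₀) = 0 := by
    apply vander_zero K (fun k => μ k ^ 2) _ hxinj
    intro n _
    have := hGn n t₀ ht₀
    rw [hG] at this
    rw [← this]
    exact Finset.sum_congr rfl fun k _ => by ring
  intro k hk
  have hpy := Real.sin_sq_add_cos_sq (μ k * t₀)
  have hAk := hA k hk
  have hBk := hB k hk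
  have h3 : d k * μ k ^ 2 = 0 := by
    have : d k * μ k ^ 2 = (d k * μ k * Real.sin (μ k * t₀)) * (μ k * Real.sin (μ k * t₀)) +
        (d k * μ k ^ 2 * Real.cos (μ k * t₀)) * Real.cos (μ k * t₀) := by
      linear_combination (-(d k * μ k ^ 2)) * hpy
    rw [this, hAk, hBk]
    ring
  have hμk : μ k ≠ 0 := ne_of_gt (hμ k hk)
  rcases mul_eq_zero.mp h3 with h | h
  · exact h
  · exact absurd h (pow_ne_zero 2 hμk)


/-- Within the class of truncated separation-of-variables solutions with
Dirichlet eigenvalues `λ_k = kπ/L`, the flux measurement `∂ₓw_K(0,t)` on `[0,T]` uniquely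
determines the coefficients: if two coefficient vectors give series whose fluxes at `x = 0`
agree on `[0,T]`, then the coefficients, the series and the associated forces coincide. -/
theorem truncated_series_uniqueness_from_flux
    (c L T : ℝ) (hc : 0 < c) (hL : 0 < L) (hT : 0 < T) (K : ℕ)
    (lam : ℕ → ℝ) (hlam : ∀ k, lam k = k * Real.pi / L)
    (b b' : ℕ → ℝ)
    (wK wK' : ℝ → ℝ → ℝ)
    (hwK : ∀ x t, wK x t = (Real.sqrt 2 / c ^ 2) *
      ∑ k ∈ Finset.Icc 1 K,
        (b k / (lam k) ^ 2) * (1 - Real.cos (c * lam k * t)) * Real.sin (lam k * x))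
    (hwK' : ∀ x t, wK' x t = (Real.sqrt 2 / c ^ 2) *
      ∑ k ∈ Finset.Icc 1 K,
        (b' k / (lam k) ^ 2) * (1 - Real.cos (c * lam k * t)) * Real.sin (lam k * x))
    (fK fK' : ℝ → ℝ)
    (hfK : ∀ x, fK x = Real.sqrt 2 * ∑ k ∈ Finset.Icc 1 K, b k * Real.sin (lam k * x))
    (hfK' : ∀ x, fK' x = Real.sqrt 2 * ∑ k ∈ Finset.Icc 1 K, b' k * Real.sin (lam k * x))
    (hflux : ∀ t ∈ Set.Icc 0 T,
      deriv (fun y => wK y t) 0 = deriv (fun y => wK' y t) 0) :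
    (∀ k ∈ Finset.Icc 1 K, b k = b' k) ∧ wK = wK' ∧ fK = fK' := by
  have hlampos : ∀ k ∈ Finset.Icc 1 K, 0 < lam k := by
    intro k hk
    simp only [Finset.mem_Icc] at hk
    rw [hlam]
    have : (0:ℝ) < (k:ℝ) := by exact_mod_cast hk.1
    positivity
  -- compute the flux derivative for a general coefficient vector
  have hderiv : ∀ (β : ℕ → ℝ) (w : ℝ → ℝ → ℝ),
      (∀ x t, w x t = (Real.sqrt 2 / c ^ 2) *
        ∑ k ∈ Finset.Icc 1 K,
          (β k / (lam k) ^ 2) * (1 - Real.cos (c * lam k * t)) * Real.sin (lam k * x)) →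
      ∀ t, deriv (fun y => w y t) 0 = (Real.sqrt 2 / c ^ 2) *
        ∑ k ∈ Finset.Icc 1 K,
          (β k / (lam k) ^ 2) * (1 - Real.cos (c * lam k * t)) * lam k := by
    intro β w hw t
    have hfun : (fun y => w y t) = fun y => (Real.sqrt 2 / c ^ 2) *
        ∑ k ∈ Finset.Icc 1 K,
          (β k / (lam k) ^ 2) * (1 - Real.cos (c * lam k * t)) * Real.sin (lam k * y) :=
      funext fun y => hw y t
    rw [hfun]
    have hsum : HasDerivAt (fun y => ∑ k ∈ Finset.Icc 1 K,
        (β k / (lam k) ^ 2) * (1 - Real.cos (c * lam k * t)) * Real.sin (lam k * y))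
        (∑ k ∈ Finset.Icc 1 K,
          (β k / (lam k) ^ 2) * (1 - Real.cos (c * lam k * t)) *
            (Real.cos (lam k * 0) * (lam k * 1))) 0 := by
      apply HasDerivAt.fun_sum
      intro k hk
      have h1 : HasDerivAt (fun y : ℝ => Real.sin (lam k * y))
          (Real.cos (lam k * 0) * (lam k * 1)) 0 :=
        (Real.hasDerivAt_sin (lam k * 0)).comp 0 ((hasDerivAt_id 0).const_mul (lam k))
      have h2 := h1.const_mul ((β k / (lam k) ^ 2) * (1 - Real.cos (c * lam k * t)))
      convert h2 using 2 <;> ring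
    have := (hsum.const_mul (Real.sqrt 2 / c ^ 2)).deriv
    rw [this]
    congr 1
    exact Finset.sum_congr rfl fun k _ => by rw [mul_zero, Real.cos_zero]; ring
  -- the core coefficient equality
  have hbb : ∀ k ∈ Finset.Icc 1 K, b k = b' k := by
    have hd : ∀ k ∈ Finset.Icc 1 K, b k / lam k - b' k / lam k = 0 := by
      apply key_uniqueness T hT K (fun k => c * lam k)
      · intro k hk
        exact mul_pos hc (hlampos k hk)
      · intro i hi j hj hne heq
        have hi' := hlampos i hi
        have hj' := hlampos j hj
        rw [hlam, hlam] at heq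
        have h2 := mul_left_cancel₀ (ne_of_gt hc) heq
        have h3 : (i:ℝ) * (Real.pi / L) = (j:ℝ) * (Real.pi / L) := by
          rw [← mul_div_assoc, ← mul_div_assoc]; exact h2
        have h4 := mul_right_cancel₀ (ne_of_gt (by positivity : (0:ℝ) < Real.pi / L)) h3
        exact hne (by exact_mod_cast h4)
      · intro t ht
        have ht' : t ∈ Set.Icc 0 T := ⟨le_of_lt ht.1, le_of_lt ht.2⟩
        have hfl := hflux t ht'
        rw [hderiv b wK hwK t, hderiv b' wK' hwK' t] at hfl
        have hne : (Real.sqrt 2 / c ^ 2) ≠ 0 := by positivity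
        have hsum := mul_left_cancel₀ hne hfl
        have expand : ∀ (β : ℕ → ℝ),
            ∑ k ∈ Finset.Icc 1 K, (β k / (lam k) ^ 2) * (1 - Real.cos (c * lam k * t)) * lam k
            = ∑ k ∈ Finset.Icc 1 K, (β k / lam k) * (1 - Real.cos (c * lam k * t)) := by
          intro β
          apply Finset.sum_congr rfl
          intro k hk
          have hlk : lam k ≠ 0 := ne_of_gt (hlampos k hk)
          field_simp
        rw [expand b, expand b'] at hsum
        rw [← sub_eq_zero] at hsum
        rw [← hsum, ← Finset.sum_sub_distrib]
        exact Finset.sum_congr rfl fun k _ => by ring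
    intro k hk
    have hlk : lam k ≠ 0 := ne_of_gt (hlampos k hk)
    have := hd k hk
    field_simp at this
    linarith
  refine ⟨hbb, ?_, ?_⟩
  · funext x t
    rw [hwK, hwK']
    congr 1
    exact Finset.sum_congr rfl fun k hk => by rw [hbb k hk]
  · funext x
    rw [hfK, hfK']
    congr 1
    exact Finset.sum_congr rfl fun k hk => by rw [hbb k hk]
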